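/- Let (P_k)_{k∈ℕ} be a sequence of real symmetric positive semidefinite n×n matrices such that the series ∑_{k} P_k is summable with sum P. Then the range of P equals the supremum over k ∈ ℕ of the ranges of the P_k, i.e. range P = ⨆_{k∈ℕ} range(P_k). -/

import Mathlib

open Matrix

open RealInnerProductSpace in
lemma isSymmetric_range_eq_orthogonal_ker
    {E : Type*} [NormedAddCommGroup E] [InnerProductSpace ℝ E]
    [FiniteDimensional ℝ E] {T : E →ₗ[ℝ] E} (hT : T.IsSymmetric) :
    LinearMap.range T = (LinearMap.ker T)ᗮ := by
  apply Submodule.eq_of_le_of_finrank_eq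
  · rintro _ ⟨x, rfl⟩
    rw [Submodule.mem_orthogonal]
    intro u hu
    rw [LinearMap.mem_ker] at hu
    rw [← hT u x, hu, inner_zero_left]
  · have h1 := LinearMap.finrank_range_add_finrank_ker T
    have h2 := Submodule.finrank_add_finrank_orthogonal (LinearMap.ker T)
    omega

theorem range_of_summable_psd_sum
    {n : ℕ} (P : ℕ → Matrix (Fin n) (Fin n) ℝ) (hP : ∀ k, (P k).PosSemidef)
    (S : Matrix (Fin n) (Fin n) ℝ) (hS : HasSum P S) :
    LinearMap.range S.mulVecLin = ⨆ k : ℕ, LinearMap.range (P k).mulVecLin := by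
  classical
  -- linear maps on matrices used to push `HasSum` around
  let ctr : Matrix (Fin n) (Fin n) ℝ →ₗ[ℝ] Matrix (Fin n) (Fin n) ℝ :=
    { toFun := fun M => Mᴴ
      map_add' := fun A B => Matrix.conjTranspose_add A B
      map_smul' := fun r A => by simp [Matrix.conjTranspose_smul] }
  have hCT : HasSum (fun k => (P k)ᴴ) Sᴴ := by
    have := hS.map ctr.toAddMonoidHom (LinearMap.continuous_of_finiteDimensional ctr)
    simpa [ctr, Function.comp_def] using this
  have hSherm : S.IsHermitian := by
    have : HasSum P Sᴴ := by
      convert hCT using 1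
      funext k
      exact ((hP k).isHermitian).symm
    exact (hS.unique this).symm
  have hmv : ∀ x : Fin n → ℝ, HasSum (fun k => P k *ᵥ x) (S *ᵥ x) := by
    intro x
    let f : Matrix (Fin n) (Fin n) ℝ →ₗ[ℝ] (Fin n → ℝ) :=
      { toFun := fun M => M *ᵥ x
        map_add' := fun A B => Matrix.add_mulVec A B x
        map_smul' := fun r A => Matrix.smul_mulVec r A x }
    have := hS.map f.toAddMonoidHom (LinearMap.continuous_of_finiteDimensional f)
    simpa [f, Function.comp_def] using this
  have hquad : ∀ x : Fin n → ℝ,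
      HasSum (fun k => x ⬝ᵥ (P k *ᵥ x)) (x ⬝ᵥ (S *ᵥ x)) := by
    intro x
    let g : (Fin n → ℝ) →ₗ[ℝ] ℝ :=
      { toFun := fun v => x ⬝ᵥ v
        map_add' := fun a b => dotProduct_add x a b
        map_smul' := fun r a => by simp }
    have := (hmv x).map g.toAddMonoidHom (LinearMap.continuous_of_finiteDimensional g)
    simpa [g, Function.comp_def] using this
  have hterm_nonneg : ∀ k (x : Fin n → ℝ), 0 ≤ x ⬝ᵥ (P k *ᵥ x) := by
    intro k x
    have := (hP k).dotProduct_mulVec_nonneg x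
    simpa using this
  have hSpsd : S.PosSemidef := by
    refine Matrix.PosSemidef.of_dotProduct_mulVec_nonneg hSherm fun x => ?_
    have hx := (hquad x).nonneg (fun k => hterm_nonneg k x)
    simpa using hx
  -- kernel of S is the intersection of the kernels
  have hkermv : ∀ x : Fin n → ℝ, S *ᵥ x = 0 ↔ ∀ k, P k *ᵥ x = 0 := by
    intro x
    constructor
    · intro h k
      have hq : HasSum (fun k => x ⬝ᵥ (P k *ᵥ x)) 0 := by
        simpa [h] using hquad x
      have hle : x ⬝ᵥ (P k *ᵥ x) ≤ 0 :=
        le_hasSum hq k (fun j _ => hterm_nonneg j x)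
      have hz : x ⬝ᵥ (P k *ᵥ x) = 0 := le_antisymm hle (hterm_nonneg k x)
      have := ((hP k).dotProduct_mulVec_zero_iff x).mp (by simpa using hz)
      exact this
    · intro h
      have : HasSum (fun _ : ℕ => (0 : Fin n → ℝ)) (S *ᵥ x) := by
        convert hmv x using 1
        funext k
        exact (h k).symm
      simpa using this.unique hasSum_zero
  -- move to Euclidean space
  let e : EuclideanSpace ℝ (Fin n) ≃ₗ[ℝ] (Fin n → ℝ) := WithLp.linearEquiv 2 ℝ (Fin n → ℝ)
  have hrange : ∀ M : Matrix (Fin n) (Fin n) ℝ,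
      Submodule.map (e : EuclideanSpace ℝ (Fin n) →ₗ[ℝ] (Fin n → ℝ)) (LinearMap.range (toEuclideanLin M)) = LinearMap.range M.mulVecLin := by
    intro M
    ext y
    constructor
    · rintro ⟨z, ⟨v, rfl⟩, rfl⟩
      exact ⟨e v, rfl⟩
    · rintro ⟨v, rfl⟩
      exact ⟨toEuclideanLin M (e.symm v), ⟨e.symm v, rfl⟩, by
        simp [e, Matrix.toEuclideanLin_apply, Matrix.mulVecLin_apply]⟩
  have hker : LinearMap.ker (toEuclideanLin S) = ⨅ k, LinearMap.ker (toEuclideanLin (P k)) := by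
    ext x
    simp only [Submodule.mem_iInf, LinearMap.mem_ker]
    have hz : ∀ M : Matrix (Fin n) (Fin n) ℝ,
        toEuclideanLin M x = 0 ↔ M *ᵥ (e x) = 0 := by
      intro M
      rw [Matrix.toEuclideanLin_apply]
      constructor
      · intro h
        have := congrArg (WithLp.equiv 2 (Fin n → ℝ)) h
        simpa [e] using this
      · intro h
        simp [e] at h ⊢
        simp [h]
    rw [hz S]
    rw [hkermv (e x)]
    exact forall_congr' fun k => (hz (P k)).symm
  -- symmetric operators: range is orthogonal complement of kernel
  have hsym : ∀ k, LinearMap.range (toEuclideanLin (P k))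
      = (LinearMap.ker (toEuclideanLin (P k)))ᗮ := fun k =>
    isSymmetric_range_eq_orthogonal_ker (Matrix.isHermitian_iff_isSymmetric.mp (hP k).isHermitian)
  have hsymS : LinearMap.range (toEuclideanLin S)
      = (LinearMap.ker (toEuclideanLin S))ᗮ :=
    isSymmetric_range_eq_orthogonal_ker (Matrix.isHermitian_iff_isSymmetric.mp hSpsd.isHermitian)
  have horth : (⨅ k, LinearMap.ker (toEuclideanLin (P k)))ᗮ
      = ⨆ k, (LinearMap.ker (toEuclideanLin (P k)))ᗮ := by
    have h1 : (⨅ k, LinearMap.ker (toEuclideanLin (P k)))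
        = (⨆ k, (LinearMap.ker (toEuclideanLin (P k)))ᗮ)ᗮ := by
      rw [← Submodule.iInf_orthogonal]
      simp [Submodule.orthogonal_orthogonal]
    rw [h1, Submodule.orthogonal_orthogonal]
  calc LinearMap.range S.mulVecLin
      = Submodule.map (e : EuclideanSpace ℝ (Fin n) →ₗ[ℝ] (Fin n → ℝ)) (LinearMap.range (toEuclideanLin S)) := (hrange S).symm
    _ = Submodule.map (e : EuclideanSpace ℝ (Fin n) →ₗ[ℝ] (Fin n → ℝ)) (⨆ k, LinearMap.range (toEuclideanLin (P k))) := by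
        rw [hsymS, hker, horth]
        congr 1
        exact iSup_congr fun k => (hsym k).symm
    _ = ⨆ k, Submodule.map (e : EuclideanSpace ℝ (Fin n) →ₗ[ℝ] (Fin n → ℝ)) (LinearMap.range (toEuclideanLin (P k))) :=
        Submodule.map_iSup _ _
    _ = ⨆ k, LinearMap.range (P k).mulVecLin := iSup_congr fun k => hrange (P k)
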